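/- Let d be a degree, X a Banach space, and Y a finite-codimensional closed subspace of X. Then X is d-small if and only if Y is d-small, and X is asymptotically d-small if and only if Y is asymptotically d-small. -/

import Mathlib

/-- A degree: a map `d` assigning to each approximation pair `(X, F)` (a Banach space `X`
together with a finite-dimensional subspace `F`) a nonnegative real, admitting a control
function `K`, non-decreasing in both variables with `lim_{s → 1⁺} K(s, t) = t`, such that
`d(Y, G) ≤ K(‖φ‖, d(X, F))` for every morphism `φ = (S, T) : (X, F) → (Y, G)`
(with the convention `‖φ‖ = 1` when `G = 0`). -/
structure Degree where
  d : ∀ (X : Type) [NormedAddCommGroup X] [NormedSpace ℝ X] [CompleteSpace X],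
    Submodule ℝ X → ℝ
  nonneg : ∀ (X : Type) [NormedAddCommGroup X] [NormedSpace ℝ X] [CompleteSpace X]
    (F : Submodule ℝ X), 0 ≤ d X F
  K : ℝ → ℝ → ℝ
  K_mono : ∀ ⦃s s' t t' : ℝ⦄, 1 ≤ s → s ≤ s' → 0 ≤ t → t ≤ t' → K s t ≤ K s' t'
  K_lim : ∀ t : ℝ, 0 ≤ t →
    Filter.Tendsto (fun s => K s t) (nhdsWithin 1 (Set.Ioi 1)) (nhds t)
  bound : ∀ (X : Type) [NormedAddCommGroup X] [NormedSpace ℝ X] [CompleteSpace X]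
    (Y : Type) [NormedAddCommGroup Y] [NormedSpace ℝ Y] [CompleteSpace Y]
    (F : Submodule ℝ X) (G : Submodule ℝ Y),
    FiniteDimensional ℝ F → FiniteDimensional ℝ G →
    ∀ (S : ↥G →L[ℝ] ↥F) (T : X →L[ℝ] Y),
    (∀ g : ↥G, T ((S g : X)) = (g : Y)) →
    d Y G ≤ K (@ite ℝ (G = ⊥) (Classical.dec _) 1 (‖S‖ * ‖T‖)) (d X F)

/-- A Banach space is `d`-small if the degrees of its finite-dimensional subspaces are
uniformly bounded. -/
def DSmall (D : Degree) (X : Type) [NormedAddCommGroup X] [NormedSpace ℝ X]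
    [CompleteSpace X] : Prop :=
  ∃ M : ℝ, ∀ F : Submodule ℝ X, FiniteDimensional ℝ F → D.d X F ≤ M

/-- A Banach space is `d`-large if it is not `d`-small. -/
def DLarge (D : Degree) (X : Type) [NormedAddCommGroup X] [NormedSpace ℝ X]
    [CompleteSpace X] : Prop :=
  ¬ DSmall D X

/-- A Banach space `X` is asymptotically `d`-small if there is `K` such that for every `n`
there is a finite-codimensional (closed) subspace `X_n ⊆ X` with `d(X, F) ≤ K` for every
`n`-dimensional subspace `F ⊆ X_n`. -/
def AsympDSmall (D : Degree) (X : Type) [NormedAddCommGroup X] [NormedSpace ℝ X]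
    [CompleteSpace X] : Prop :=
  ∃ K : ℝ, ∀ n : ℕ, ∃ Xn : Submodule ℝ X, IsClosed (Xn : Set X) ∧
    FiniteDimensional ℝ (X ⧸ Xn) ∧
    ∀ F : Submodule ℝ X, F ≤ Xn → FiniteDimensional ℝ F →
      Module.finrank ℝ F = n → D.d X F ≤ K



open Submodule Module
set_option maxHeartbeats 1000000
set_option synthInstance.maxHeartbeats 1000000
set_option linter.unusedSectionVars false
set_option linter.unusedVariables false

noncomputable section

section Aux
variable {E : Type*} [NormedAddCommGroup E] [NormedSpace ℝ E]

/-- Riesz: a unit vector 1/2-far from a proper closed subspace. -/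
lemma exists_far_unit (A : Submodule ℝ E) (hA : IsClosed (A : Set E)) (hne : A ≠ ⊤) :
    ∃ v : E, ‖v‖ = 1 ∧ ∀ a ∈ A, (1:ℝ)/2 ≤ ‖v - a‖ := by
  obtain ⟨x, hx⟩ : ∃ x : E, x ∉ A := by
    by_contra h
    push_neg at h
    exact hne (Submodule.eq_top_iff'.2 h)
  obtain ⟨x₀, hx₀, hfar⟩ := riesz_lemma hA ⟨x, hx⟩ (r := 1/2) (by norm_num)
  have hx0 : x₀ ≠ 0 := fun h => hx₀ (h ▸ A.zero_mem)
  have hn : (0:ℝ) < ‖x₀‖ := norm_pos_iff.2 hx0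
  refine ⟨‖x₀‖⁻¹ • x₀, by simp [norm_smul, hn.ne', inv_mul_cancel₀ hn.ne'], fun a ha => ?_⟩
  have hmem : ‖x₀‖ • a ∈ A := A.smul_mem _ ha
  have := hfar _ hmem
  have heq : ‖x₀‖⁻¹ • x₀ - a = ‖x₀‖⁻¹ • (x₀ - ‖x₀‖ • a) := by
    rw [smul_sub, smul_smul, inv_mul_cancel₀ hn.ne', one_smul]
  rw [heq, norm_smul, norm_inv, norm_norm]
  calc (1:ℝ)/2 = ‖x₀‖⁻¹ * ((1/2) * ‖x₀‖) := by field_simp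
  _ ≤ ‖x₀‖⁻¹ * ‖x₀ - ‖x₀‖ • a‖ := by
      have : (0:ℝ) ≤ ‖x₀‖⁻¹ := by positivity
      nlinarith

/-- A norm-≤2 functional vanishing on a closed subspace and equal to 1 at a point
which is 1/2-far from it. -/
lemma exists_functional (A : Submodule ℝ E) (hA : IsClosed (A : Set E)) (v : E)
    (hv : ∀ a ∈ A, (1:ℝ)/2 ≤ ‖v - a‖) :
    ∃ φ : E →L[ℝ] ℝ, ‖φ‖ ≤ 2 ∧ φ v = 1 ∧ ∀ a ∈ A, φ a = 0 := by
  letI : NormedAddCommGroup (E ⧸ A) := Submodule.Quotient.normedAddCommGroup A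
  letI : NormedSpace ℝ (E ⧸ A) := Submodule.Quotient.normedSpace A ℝ
  -- continuous quotient map
  have hle : ∀ m : E, ‖(Submodule.Quotient.mk m : E ⧸ A)‖ ≤ 1 * ‖m‖ := fun m => by
    simpa using Submodule.Quotient.norm_mk_le A m
  let q : E →L[ℝ] (E ⧸ A) := LinearMap.mkContinuous A.mkQ 1 hle
  have hw : (1:ℝ)/2 ≤ ‖(Submodule.Quotient.mk v : E ⧸ A)‖ := by
    by_contra h
    push_neg at h
    obtain ⟨m, hm, hmlt⟩ := Submodule.Quotient.norm_mk_lt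
      (Submodule.Quotient.mk v : E ⧸ A) (ε := 1/2 - ‖(Submodule.Quotient.mk v : E ⧸ A)‖)
      (by linarith)
    have : v - m ∈ A := by
      simpa using A.neg_mem ((Submodule.Quotient.eq A).1 hm)
    have h1 := hv _ this
    simp only [sub_sub_cancel] at h1
    linarith
  have hwne : (Submodule.Quotient.mk v : E ⧸ A) ≠ 0 := by
    intro h; rw [h] at hw; simp at hw; linarith
  obtain ⟨g, hg1, hgv⟩ := exists_dual_vector ℝ _ (norm_ne_zero_iff.2 hwne)
  set ρ : ℝ := ‖(Submodule.Quotient.mk v : E ⧸ A)‖ with hρ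
  have hρpos : (0:ℝ) < ρ := by linarith
  refine ⟨(ρ⁻¹ • g).comp q, ?_, ?_, ?_⟩
  · refine (ContinuousLinearMap.opNorm_comp_le _ _).trans ?_
    have hq : ‖q‖ ≤ 1 := LinearMap.mkContinuous_norm_le _ zero_le_one _
    have : ‖ρ⁻¹ • g‖ ≤ ρ⁻¹ := by
      calc ‖ρ⁻¹ • g‖ ≤ ‖ρ⁻¹‖ * ‖g‖ := ContinuousLinearMap.opNorm_smul_le _ _
      _ = ρ⁻¹ := by rw [hg1, Real.norm_eq_abs, abs_of_pos (by positivity), mul_one]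
    have h2 : ρ⁻¹ ≤ 2 := by
      rw [inv_le_comm₀ hρpos (by norm_num)]
      linarith
    nlinarith [norm_nonneg q, norm_nonneg (ρ⁻¹ • g)]
  · have : q v = Submodule.Quotient.mk v := rfl
    simp [this, hgv, ← hρ, inv_mul_cancel₀ hρpos.ne']
  · intro a ha
    have : q a = 0 := by
      show (Submodule.Quotient.mk a : E ⧸ A) = 0
      simpa using (Submodule.Quotient.mk_eq_zero A).2 ha
    simp [this]

end Aux


variable {E : Type*} [NormedAddCommGroup E] [NormedSpace ℝ E]

lemma exists_biorthogonal [CompleteSpace E] (hE : ¬ FiniteDimensional ℝ E)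
    (G : Submodule ℝ E) (hG : FiniteDimensional ℝ G) (c : ℕ) :
    ∃ (v : Fin c → E) (φ : Fin c → (E →L[ℝ] ℝ)),
      (∀ i, ‖v i‖ = 1) ∧ (∀ i j, φ i (v j) = if i = j then 1 else 0) ∧
      (∀ i, ∀ g ∈ G, φ i g = 0) ∧ (∀ i, ‖φ i‖ ≤ 2 * 3 ^ c) := by
  haveI := hG
  induction c with
  | zero => exact ⟨Fin.elim0, Fin.elim0, fun i => i.elim0, fun i => i.elim0,
      fun i => i.elim0, fun i => i.elim0⟩
  | succ n ih =>
    obtain ⟨v, φ, h1, h2, h3, h4⟩ := ih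
    set A : Submodule ℝ E := G ⊔ span ℝ (Set.range v) with hAdef
    haveI : FiniteDimensional ℝ (span ℝ (Set.range v)) :=
      FiniteDimensional.span_of_finite ℝ (Set.finite_range v)
    haveI : FiniteDimensional ℝ A := Submodule.finiteDimensional_sup _ _
    have hAclosed : IsClosed (A : Set E) := A.closed_of_finiteDimensional
    have hAne : A ≠ ⊤ := by
      intro h
      haveI : FiniteDimensional ℝ (⊤ : Submodule ℝ E) := h ▸ inferInstance
      exact hE (Module.Finite.equiv (Submodule.topEquiv (R := ℝ) (M := E)))
    obtain ⟨w, hw1, hwfar⟩ := exists_far_unit A hAclosed hAne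
    obtain ⟨ψ, hψn, hψw, hψA⟩ := exists_functional A hAclosed w hwfar
    have hvA : ∀ j, v j ∈ A := fun j =>
      Submodule.mem_sup_right (Submodule.subset_span (Set.mem_range_self j))
    have hGA : ∀ g ∈ G, g ∈ A := fun g hg => Submodule.mem_sup_left hg
    refine ⟨Fin.snoc v w, Fin.snoc (fun i => φ i - (φ i w) • ψ) ψ, ?_, ?_, ?_, ?_⟩
    · intro i
      refine Fin.lastCases ?_ (fun i => ?_) i
      · simpa using hw1
      · simpa using h1 i
    · intro i j
      refine Fin.lastCases ?_ (fun i => ?_) i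
      · refine Fin.lastCases ?_ (fun j => ?_) j
        · simpa using hψw
        · have : ψ (v j) = 0 := hψA _ (hvA j)
          simp [this, (Fin.castSucc_lt_last j).ne']
      · refine Fin.lastCases ?_ (fun j => ?_) j
        · simp [hψw, (Fin.castSucc_lt_last i).ne]
        · have : ψ (v j) = 0 := hψA _ (hvA j)
          simp [this, h2 i j, Fin.castSucc_inj]
    · intro i g hg
      refine Fin.lastCases ?_ (fun i => ?_) i
      · simpa using hψA g (hGA g hg)
      · have e1 : ψ g = 0 := hψA g (hGA g hg)
        have e2 : φ i g = 0 := h3 i g hg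
        simp [e1, e2]
    · intro i
      refine Fin.lastCases ?_ (fun i => ?_) i
      · simp only [Fin.snoc_last]
        have : (1:ℝ) ≤ 3 ^ (n+1) := one_le_pow₀ (by norm_num)
        nlinarith
      · simp only [Fin.snoc_castSucc]
        have ha : ‖φ i - (φ i w) • ψ‖ ≤ ‖φ i‖ + ‖(φ i w) • ψ‖ := norm_sub_le _ _
        have hb : ‖(φ i w) • ψ‖ ≤ |φ i w| * ‖ψ‖ := by
          simpa [Real.norm_eq_abs] using ContinuousLinearMap.opNorm_smul_le (φ i w) ψ
        have hc : |φ i w| ≤ ‖φ i‖ := by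
          have := (φ i).le_opNorm w
          rwa [hw1, mul_one, Real.norm_eq_abs] at this
        have hd := h4 i
        have he : (0:ℝ) ≤ |φ i w| := abs_nonneg _
        have hf : (3:ℝ) ^ (n+1) = 3 ^ n * 3 := pow_succ 3 n
        nlinarith [norm_nonneg ψ, norm_nonneg (φ i)]

lemma Degree.K_one_le (D : Degree) {t : ℝ} (ht : 0 ≤ t) : D.K 1 t ≤ t := by
  refine ge_of_tendsto (D.K_lim t ht) ?_
  filter_upwards [self_mem_nhdsWithin] with s hs
  exact D.K_mono le_rfl (le_of_lt hs) ht le_rfl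

lemma Degree.transfer (D : Degree)
    (X : Type) [NormedAddCommGroup X] [NormedSpace ℝ X] [CompleteSpace X]
    (Y : Type) [NormedAddCommGroup Y] [NormedSpace ℝ Y] [CompleteSpace Y]
    (F : Submodule ℝ X) (G : Submodule ℝ Y)
    (hF : FiniteDimensional ℝ F) (hG : FiniteDimensional ℝ G)
    (S : ↥G →L[ℝ] ↥F) (T : X →L[ℝ] Y)
    (hTS : ∀ g : ↥G, T ((S g : X)) = (g : Y))
    {c M : ℝ} (hc : 1 ≤ c) (hST : ‖S‖ * ‖T‖ ≤ c) (hM : D.d X F ≤ M) :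
    D.d Y G ≤ D.K c (max M 0) := by
  have hb := D.bound X Y F G hF hG S T hTS
  have ht : 0 ≤ D.d X F := D.nonneg X F
  have ht' : D.d X F ≤ max M 0 := le_trans hM (le_max_left _ _)
  refine hb.trans ?_
  by_cases hbot : G = ⊥
  · rw [if_pos hbot]; exact D.K_mono le_rfl hc ht ht'
  · rw [if_neg hbot]
    obtain ⟨g, hg, hg0⟩ := (Submodule.ne_bot_iff G).1 hbot
    set gg : ↥G := ⟨g, hg⟩ with hgg
    have h2 : ‖gg‖ ≤ ‖S‖ * ‖T‖ * ‖gg‖ := by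
      calc ‖gg‖ = ‖T ((S gg : X))‖ := by rw [hTS gg]; rfl
      _ ≤ ‖T‖ * ‖(S gg : X)‖ := T.le_opNorm _
      _ = ‖T‖ * ‖S gg‖ := rfl
      _ ≤ ‖T‖ * (‖S‖ * ‖gg‖) := by
          have := S.le_opNorm gg
          nlinarith [norm_nonneg T]
      _ = ‖S‖ * ‖T‖ * ‖gg‖ := by ring
    have hgpos : 0 < ‖gg‖ := by
      simp only [norm_pos_iff]
      exact fun h => hg0 (by simpa [hgg] using congrArg (Subtype.val) h)
    have h1 : 1 ≤ ‖S‖ * ‖T‖ := by nlinarith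
    exact D.K_mono h1 hST ht ht'

lemma hard_direction (D : Degree)
    (X : Type) [NormedAddCommGroup X] [NormedSpace ℝ X] [CompleteSpace X]
    (Y : Submodule ℝ X) (hY : IsClosed (Y : Set X)) [CompleteSpace ↥Y]
    (hcodim : FiniteDimensional ℝ (X ⧸ Y)) (hXinf : ¬ FiniteDimensional ℝ X) :
    DSmall D ↥Y → DSmall D X := by
  rintro ⟨M, hM⟩
  obtain ⟨P, hP⟩ := Submodule.ClosedComplemented.of_quotient_finiteDimensional hY
  -- the "vertical" finite-dimensional complement
  obtain ⟨Z, hZker⟩ : ∃ Z : Submodule ℝ X, Z = LinearMap.ker (P : X →ₗ[ℝ] ↥Y) := ⟨_, rfl⟩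
  have hZmem : ∀ x : X, x ∈ Z ↔ P x = 0 := fun x => by rw [hZker, LinearMap.mem_ker]; rfl
  haveI : FiniteDimensional ℝ ↥Z := by
    refine FiniteDimensional.of_injective (Y.mkQ.comp Z.subtype) ?_
    intro z₁ z₂ h
    have h' : (z₁ : X) - (z₂ : X) ∈ Y := by
      have h2 : (Submodule.Quotient.mk ((z₁ : X)) : X ⧸ Y) = Submodule.Quotient.mk ((z₂ : X)) := by
        simpa [Submodule.mkQ_apply] using h
      exact (Submodule.Quotient.eq Y).1 h2
    have e1 : P ((z₁ : X) - (z₂ : X)) = ⟨(z₁:X) - (z₂:X), h'⟩ := hP ⟨_, h'⟩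
    have e2 : P ((z₁ : X) - (z₂ : X)) = 0 := by
      have hz₁ : P (z₁ : X) = 0 := (hZmem _).1 z₁.2
      have hz₂ : P (z₂ : X) = 0 := (hZmem _).1 z₂.2
      rw [map_sub, hz₁, hz₂, sub_zero]
    rw [e1] at e2
    have : (z₁:X) - (z₂:X) = 0 := congrArg Subtype.val e2
    exact Subtype.ext (sub_eq_zero.1 this)
  have hYinf : ¬ FiniteDimensional ℝ ↥Y := by
    intro h
    exact hXinf (IsNoetherian.iff_fg.1 ((isNoetherian_iff_submodule_quotient Y).2
      ⟨IsNoetherian.iff_fg.2 h, IsNoetherian.iff_fg.2 hcodim⟩))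
  set c' : ℕ := finrank ℝ ↥Z with hc'
  let bZ : Basis (Fin c') ℝ ↥Z := Module.finBasis ℝ ↥Z
  let coordC : Fin c' → (↥Z →L[ℝ] ℝ) := fun i =>
    LinearMap.toContinuousLinearMap (bZ.coord i)
  -- the projection onto Z
  have hQmem : ∀ x : X, (ContinuousLinearMap.id ℝ X - Y.subtypeL.comp P) x ∈ Z := by
    intro x
    have h0 : P x - P ((P x : ↥Y) : X) = 0 := by
      rw [hP (P x), sub_self]
    refine (hZmem _).2 ?_
    simpa using h0
  let Qh : X →L[ℝ] ↥Z :=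
    (ContinuousLinearMap.id ℝ X - Y.subtypeL.comp P).codRestrict Z hQmem
  have hQapp : ∀ x : X, ((Qh x : X)) = x - ((P x : ↥Y) : X) := fun x => rfl
  have hQn : ‖Qh‖ ≤ 1 + ‖P‖ := by
    refine ContinuousLinearMap.opNorm_le_bound _ (by positivity) (fun x => ?_)
    have : ‖Qh x‖ = ‖x - ((P x : ↥Y) : X)‖ := rfl
    rw [this]
    calc ‖x - ((P x : ↥Y) : X)‖ ≤ ‖x‖ + ‖((P x : ↥Y) : X)‖ := norm_sub_le _ _
    _ = ‖x‖ + ‖P x‖ := rfl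
    _ ≤ ‖x‖ + ‖P‖ * ‖x‖ := by linarith [P.le_opNorm x]
    _ = (1 + ‖P‖) * ‖x‖ := by ring
  -- constants
  set Cj : ℝ := ∑ i, ‖coordC i‖ with hCjdef
  set Cρ : ℝ := ∑ i, (2 * 3 ^ c') * ‖bZ i‖ with hCρdef
  have hCj0 : 0 ≤ Cj := Finset.sum_nonneg (fun i _ => (coordC i).opNorm_nonneg)
  have hCρ0 : 0 ≤ Cρ := Finset.sum_nonneg (fun i _ => by positivity)
  set C₁ : ℝ := ‖P‖ + Cj * (1 + ‖P‖) with hC₁def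
  set C₂ : ℝ := 1 + Cρ + Cj * Cρ with hC₂def
  have hC₁0 : 0 ≤ C₁ := by positivity
  have hC₂0 : 0 ≤ C₂ := by positivity
  set c₁ : ℝ := max 1 (C₁ * C₂) with hc₁def
  refine ⟨D.K c₁ (max M 0), fun F hF => ?_⟩
  haveI := hF
  -- the image of F under P
  set G₀ : Submodule ℝ ↥Y := F.map (P : X →ₗ[ℝ] ↥Y) with hG₀def
  haveI : FiniteDimensional ℝ ↥G₀ := inferInstance
  obtain ⟨v, φ, hv1, hbi, hvG, hφn⟩ := exists_biorthogonal hYinf G₀ inferInstance c'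
  let j : ↥Z →L[ℝ] ↥Y := ∑ i, (coordC i).smulRight (v i)
  let ρ : ↥Y →L[ℝ] ↥Z := ∑ i, (φ i).smulRight (bZ i)
  have hjapp : ∀ z : ↥Z, j z = ∑ i, (bZ.coord i z) • v i := by
    intro z
    simp [j, ContinuousLinearMap.sum_apply, coordC]
  have hρapp : ∀ y : ↥Y, ρ y = ∑ i, (φ i y) • bZ i := by
    intro y
    simp [ρ, ContinuousLinearMap.sum_apply]
  have hρj : ∀ z : ↥Z, ρ (j z) = z := by
    intro z
    rw [hjapp z, hρapp]
    have hφj : ∀ i, φ i (∑ k, (bZ.coord k z) • v k) = bZ.coord i z := by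
      intro i
      rw [map_sum]
      simp only [map_smul, hbi, smul_eq_mul, mul_ite, mul_one, mul_zero]
      simp [Finset.sum_ite_eq]
    calc (∑ i, (φ i (∑ k, (bZ.coord k z) • v k)) • bZ i)
        = ∑ i, (bZ.coord i z) • bZ i := by
          refine Finset.sum_congr rfl (fun i _ => by rw [hφj i])
    _ = z := by
        simpa [Basis.coord_apply] using bZ.sum_repr z
  have hρG₀ : ∀ y : ↥Y, y ∈ G₀ → ρ y = 0 := by
    intro y hy
    rw [hρapp]
    refine Finset.sum_eq_zero (fun i _ => ?_)
    rw [hvG i y hy, zero_smul]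
  -- main maps
  let Sh : X →L[ℝ] ↥Y := P + j.comp Qh
  let T : ↥Y →L[ℝ] X := Y.subtypeL + Z.subtypeL.comp ρ - Y.subtypeL.comp (j.comp ρ)
  have hTapp : ∀ y : ↥Y, T y = (y : X) + ((ρ y : ↥Z) : X) - ((j (ρ y) : ↥Y) : X) := by
    intro y; rfl
  have hTS' : ∀ x : X, x ∈ F → T (Sh x) = x := by
    intro x hx
    have hSx : Sh x = P x + j (Qh x) := rfl
    have hPxG₀ : (P x : ↥Y) ∈ G₀ := ⟨x, hx, rfl⟩
    have hρS : ρ (Sh x) = Qh x := by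
      rw [hSx, map_add, hρG₀ _ hPxG₀, zero_add, hρj]
    rw [hTapp, hρS, hSx]
    push_cast
    rw [hQapp]
    abel
  -- norm bounds
  have hjn : ‖j‖ ≤ Cj := by
    have hj_eq : j = ∑ i, (coordC i).smulRight (v i) := rfl
    rw [hj_eq]
    refine le_trans (norm_sum_le Finset.univ (fun i => (coordC i).smulRight (v i))) ?_
    refine Finset.sum_le_sum (fun i _ => ?_)
    rw [ContinuousLinearMap.norm_smulRight_apply, hv1 i, mul_one]
  have hρn : ‖ρ‖ ≤ Cρ := by
    have hρ_eq : ρ = ∑ i, (φ i).smulRight (bZ i) := rfl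
    rw [hρ_eq]
    refine le_trans (norm_sum_le Finset.univ (fun i => (φ i).smulRight (bZ i))) ?_
    refine Finset.sum_le_sum (fun i _ => ?_)
    rw [ContinuousLinearMap.norm_smulRight_apply]
    exact mul_le_mul_of_nonneg_right (hφn i) (norm_nonneg _)
  have hShn : ‖Sh‖ ≤ C₁ := by
    refine (ContinuousLinearMap.opNorm_add_le _ _).trans ?_
    have h2 : ‖j.comp Qh‖ ≤ Cj * (1 + ‖P‖) := by
      refine (ContinuousLinearMap.opNorm_comp_le _ _).trans ?_
      exact _root_.mul_le_mul hjn hQn Qh.opNorm_nonneg hCj0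
    rw [hC₁def]
    linarith
  have hTn : ‖T‖ ≤ C₂ := by
    refine ContinuousLinearMap.opNorm_le_bound _ hC₂0 (fun y => ?_)
    rw [hTapp]
    have e1 : ‖((ρ y : ↥Z) : X)‖ = ‖ρ y‖ := rfl
    have e2 : ‖((j (ρ y) : ↥Y) : X)‖ = ‖j (ρ y)‖ := rfl
    have b1 : ‖ρ y‖ ≤ Cρ * ‖y‖ := by
      calc ‖ρ y‖ ≤ ‖ρ‖ * ‖y‖ := ρ.le_opNorm y
      _ ≤ Cρ * ‖y‖ := mul_le_mul_of_nonneg_right hρn (norm_nonneg _)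
    have b2 : ‖j (ρ y)‖ ≤ Cj * (Cρ * ‖y‖) := by
      calc ‖j (ρ y)‖ ≤ ‖j‖ * ‖ρ y‖ := j.le_opNorm _
      _ ≤ Cj * (Cρ * ‖y‖) := by
          refine _root_.mul_le_mul hjn b1 (norm_nonneg _) hCj0
    calc ‖(y : X) + ((ρ y : ↥Z) : X) - ((j (ρ y) : ↥Y) : X)‖
        ≤ ‖(y : X) + ((ρ y : ↥Z) : X)‖ + ‖((j (ρ y) : ↥Y) : X)‖ := norm_sub_le _ _
    _ ≤ ‖(y : X)‖ + ‖((ρ y : ↥Z) : X)‖ + ‖((j (ρ y) : ↥Y) : X)‖ := by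
        linarith [norm_add_le (y : X) ((ρ y : ↥Z) : X)]
    _ ≤ ‖y‖ + Cρ * ‖y‖ + Cj * (Cρ * ‖y‖) := by
        rw [e1, e2]
        have : ‖(y : X)‖ = ‖y‖ := rfl
        linarith
    _ = C₂ * ‖y‖ := by rw [hC₂def]; ring
  -- target submodule
  set G₁ : Submodule ℝ ↥Y := F.map (Sh : X →ₗ[ℝ] ↥Y) with hG₁def
  haveI : FiniteDimensional ℝ ↥G₁ := inferInstance
  let S : ↥F →L[ℝ] ↥G₁ :=
    (Sh.comp F.subtypeL).codRestrict G₁ (fun f => ⟨(f : X), f.2, rfl⟩)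
  have hSapp : ∀ f : ↥F, ((S f : ↥Y)) = Sh (f : X) := fun f => rfl
  have hSn : ‖S‖ ≤ C₁ := by
    refine ContinuousLinearMap.opNorm_le_bound _ hC₁0 (fun f => ?_)
    have : ‖S f‖ = ‖Sh (f : X)‖ := rfl
    rw [this]
    calc ‖Sh (f : X)‖ ≤ ‖Sh‖ * ‖(f : X)‖ := Sh.le_opNorm _
    _ ≤ C₁ * ‖f‖ := mul_le_mul_of_nonneg_right hShn (norm_nonneg _)
  have hTS : ∀ f : ↥F, T ((S f : ↥Y)) = (f : X) := by
    intro f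
    rw [hSapp]
    exact hTS' _ f.2
  have hST : ‖S‖ * ‖T‖ ≤ c₁ := by
    refine le_trans ?_ (le_max_right 1 _)
    exact _root_.mul_le_mul hSn hTn T.opNorm_nonneg hC₁0
  exact D.transfer ↥Y X G₁ F inferInstance hF S T hTS (le_max_left _ _) hST
    (hM G₁ inferInstance)

section Pieces

variable (D : Degree) (X : Type) [NormedAddCommGroup X] [NormedSpace ℝ X] [CompleteSpace X]
variable (Y : Submodule ℝ X) [CompleteSpace ↥Y]

/-- the canonical inclusion `G → G.map Y.subtype` as a CLM, for `G ⊆ Y`. -/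
noncomputable def inclCLM (G : Submodule ℝ ↥Y) : ↥G →L[ℝ] ↥(G.map Y.subtype) :=
  (Y.subtypeL.comp G.subtypeL).codRestrict (G.map Y.subtype)
    (fun g => Submodule.mem_map_of_mem g.2)

lemma inclCLM_norm_le (G : Submodule ℝ ↥Y) : ‖inclCLM X Y G‖ ≤ 1 := by
  refine ContinuousLinearMap.opNorm_le_bound _ zero_le_one (fun g => ?_)
  have : ‖inclCLM X Y G g‖ = ‖g‖ := rfl
  rw [this, one_mul]

lemma dsmall_easy (P : X →L[ℝ] ↥Y) (hP : ∀ y : ↥Y, P (y : X) = y) :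
    DSmall D X → DSmall D ↥Y := by
  rintro ⟨M, hM⟩
  refine ⟨D.K (max 1 ‖P‖) (max M 0), fun G hG => ?_⟩
  haveI := hG
  haveI : FiniteDimensional ℝ ↥(G.map Y.subtype) := inferInstance
  have hTS : ∀ g : ↥G, P ((inclCLM X Y G g : X)) = (g : ↥Y) := fun g => hP _
  have hST : ‖inclCLM X Y G‖ * ‖P‖ ≤ max 1 ‖P‖ := by
    calc ‖inclCLM X Y G‖ * ‖P‖ ≤ 1 * ‖P‖ :=
      mul_le_mul_of_nonneg_right (inclCLM_norm_le X Y G) P.opNorm_nonneg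
    _ = ‖P‖ := one_mul _
    _ ≤ max 1 ‖P‖ := le_max_right _ _
  exact D.transfer X ↥Y (G.map Y.subtype) G inferInstance hG (inclCLM X Y G) P hTS
    (le_max_left _ _) hST (hM _ inferInstance)

lemma dsmall_of_findim (hX : FiniteDimensional ℝ X) : DSmall D X := by
  haveI := hX
  refine ⟨max (D.d X ⊤) 0, fun F hF => ?_⟩
  haveI := hF
  let S : ↥F →L[ℝ] ↥(⊤ : Submodule ℝ X) :=
    F.subtypeL.codRestrict ⊤ (fun _ => trivial)
  have hTS : ∀ f : ↥F, (ContinuousLinearMap.id ℝ X) ((S f : X)) = (f : X) := fun _ => rfl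
  have hSn : ‖S‖ ≤ 1 := by
    refine ContinuousLinearMap.opNorm_le_bound _ zero_le_one (fun f => ?_)
    have : ‖S f‖ = ‖f‖ := rfl
    rw [this, one_mul]
  have hST : ‖S‖ * ‖ContinuousLinearMap.id ℝ X‖ ≤ 1 :=
    mul_le_one₀ hSn (ContinuousLinearMap.id ℝ X).opNorm_nonneg
      ContinuousLinearMap.norm_id_le
  have h := D.transfer X X ⊤ F inferInstance hF S (ContinuousLinearMap.id ℝ X) hTS
    le_rfl hST (le_refl (D.d X ⊤))
  exact h.trans (D.K_one_le (le_max_right _ _))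

lemma asymp_easy (hY : IsClosed (Y : Set X)) (P : X →L[ℝ] ↥Y)
    (hP : ∀ y : ↥Y, P (y : X) = y) :
    AsympDSmall D X → AsympDSmall D ↥Y := by
  rintro ⟨K₀, hK⟩
  refine ⟨D.K (max 1 ‖P‖) (max K₀ 0), fun n => ?_⟩
  obtain ⟨Xn, hXncl, hXnq, hXn⟩ := hK n
  refine ⟨(Xn ⊓ Y).comap Y.subtype, ?_, ?_, ?_⟩
  · have hset : (((Xn ⊓ Y).comap Y.subtype : Submodule ℝ ↥Y) : Set ↥Y)
        = (Subtype.val : ↥Y → X) ⁻¹' (Xn : Set X) := by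
      ext y
      simp only [SetLike.mem_coe, Submodule.mem_comap, Submodule.mem_inf, Set.mem_preimage]
      exact ⟨fun h => h.1, fun h => ⟨h, y.2⟩⟩
    rw [hset]
    exact hXncl.preimage continuous_subtype_val
  · haveI := hXnq
    refine FiniteDimensional.of_injective
      (Submodule.liftQ _ (Xn.mkQ.comp Y.subtype) ?_) ?_
    · intro y hy
      simp only [LinearMap.mem_ker, LinearMap.comp_apply, Submodule.mkQ_apply,
        Submodule.Quotient.mk_eq_zero]
      exact ((Submodule.mem_comap.1 hy).1)
    · rw [← LinearMap.ker_eq_bot]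
      refine Submodule.ker_liftQ_eq_bot _ _ _ ?_
      intro y hy
      simp only [LinearMap.mem_ker, LinearMap.comp_apply, Submodule.mkQ_apply,
        Submodule.Quotient.mk_eq_zero] at hy
      exact Submodule.mem_comap.2 ⟨hy, y.2⟩
  · intro G hGle hGfd hGrk
    haveI := hGfd
    haveI : FiniteDimensional ℝ ↥(G.map Y.subtype) := inferInstance
    have hFle : G.map Y.subtype ≤ Xn := by
      rintro x ⟨g, hg, rfl⟩
      exact (Submodule.mem_comap.1 (hGle hg)).1
    have hFrk : finrank ℝ ↥(G.map Y.subtype) = n := by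
      rw [Submodule.finrank_map_subtype_eq]; exact hGrk
    have hTS : ∀ g : ↥G, P ((inclCLM X Y G g : X)) = (g : ↥Y) := fun g => hP _
    have hST : ‖inclCLM X Y G‖ * ‖P‖ ≤ max 1 ‖P‖ := by
      calc ‖inclCLM X Y G‖ * ‖P‖ ≤ 1 * ‖P‖ :=
        mul_le_mul_of_nonneg_right (inclCLM_norm_le X Y G) P.opNorm_nonneg
      _ = ‖P‖ := one_mul _
      _ ≤ max 1 ‖P‖ := le_max_right _ _
    exact D.transfer X ↥Y (G.map Y.subtype) G inferInstance hGfd (inclCLM X Y G) P hTS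
      (le_max_left _ _) hST (hXn _ hFle inferInstance hFrk)

lemma asymp_hard (hY : IsClosed (Y : Set X)) (hcodim : FiniteDimensional ℝ (X ⧸ Y)) :
    AsympDSmall D ↥Y → AsympDSmall D X := by
  rintro ⟨K₀, hK⟩
  refine ⟨D.K 1 (max K₀ 0), fun n => ?_⟩
  obtain ⟨Yn, hYncl, hYnq, hYn⟩ := hK n
  haveI := hYnq
  refine ⟨Yn.map Y.subtype, ?_, ?_, ?_⟩
  · have hset : ((Yn.map Y.subtype : Submodule ℝ X) : Set X)
        = (Subtype.val : ↥Y → X) '' (Yn : Set ↥Y) := by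
      ext x
      simp only [SetLike.mem_coe, Submodule.mem_map, Set.mem_image]
      exact ⟨fun ⟨y, hy, he⟩ => ⟨y, hy, he⟩, fun ⟨y, hy, he⟩ => ⟨y, hy, he⟩⟩
    rw [hset]
    exact hY.isClosedMap_subtype_val _ hYncl
  · -- finite codimension of `Yn.map Y.subtype` in `X`
    have hXnY : Yn.map Y.subtype ≤ Y := Submodule.map_subtype_le (p := Y) Yn
    have hle1 : Yn ≤ LinearMap.ker ((Yn.map Y.subtype).mkQ.comp Y.subtype) := by
      intro y hy
      simp only [LinearMap.mem_ker, LinearMap.comp_apply, Submodule.mkQ_apply,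
        Submodule.Quotient.mk_eq_zero]
      exact Submodule.mem_map_of_mem hy
    set f : (↥Y ⧸ Yn) →ₗ[ℝ] (X ⧸ Yn.map Y.subtype) :=
      Submodule.liftQ Yn ((Yn.map Y.subtype).mkQ.comp Y.subtype) hle1 with hfdef
    haveI : FiniteDimensional ℝ ↥(LinearMap.range f) := inferInstance
    have hle2 : Yn.map Y.subtype ≤ LinearMap.ker Y.mkQ := by
      rw [Submodule.ker_mkQ]; exact hXnY
    set g : (X ⧸ Yn.map Y.subtype) →ₗ[ℝ] (X ⧸ Y) :=
      Submodule.liftQ _ Y.mkQ hle2 with hgdef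
    have hle3 : LinearMap.range f ≤ LinearMap.ker g := by
      rintro _ ⟨q, rfl⟩
      obtain ⟨y, rfl⟩ := Submodule.mkQ_surjective Yn q
      simp only [LinearMap.mem_ker, hfdef, hgdef, Submodule.mkQ_apply,
        Submodule.liftQ_apply, LinearMap.comp_apply, Submodule.Quotient.mk_eq_zero]
      exact y.2
    have hker : LinearMap.ker g ≤ LinearMap.range f := by
      intro q hq
      obtain ⟨x, rfl⟩ := Submodule.mkQ_surjective _ q
      simp only [LinearMap.mem_ker, hgdef, Submodule.mkQ_apply, Submodule.liftQ_apply,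
        Submodule.Quotient.mk_eq_zero] at hq
      refine ⟨Submodule.Quotient.mk (⟨x, hq⟩ : ↥Y), ?_⟩
      simp only [hfdef, Submodule.liftQ_apply, LinearMap.comp_apply, Submodule.mkQ_apply]
      rfl
    have hinj : Function.Injective (Submodule.liftQ _ g hle3) := by
      rw [← LinearMap.ker_eq_bot]
      exact Submodule.ker_liftQ_eq_bot _ _ _ hker
    haveI : FiniteDimensional ℝ ((X ⧸ Yn.map Y.subtype) ⧸ (LinearMap.range f)) :=
      FiniteDimensional.of_injective _ hinj
    exact IsNoetherian.iff_fg.1 ((isNoetherian_iff_submodule_quotient (LinearMap.range f)).2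
      ⟨IsNoetherian.iff_fg.2 inferInstance, IsNoetherian.iff_fg.2 inferInstance⟩)
  · intro F hFle hFfd hFrk
    haveI := hFfd
    have hFY : F ≤ Y := le_trans hFle (Submodule.map_subtype_le (p := Y) Yn)
    set G : Submodule ℝ ↥Y := F.comap Y.subtype with hGdef
    have hGle : G ≤ Yn := by
      intro y hy
      obtain ⟨y', hy', he⟩ := hFle (Submodule.mem_comap.1 hy)
      rwa [show y' = y from Subtype.ext he] at hy'
    haveI : FiniteDimensional ℝ ↥G :=
      Module.Finite.equiv (Submodule.comapSubtypeEquivOfLe hFY).symm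
    have hGrk : finrank ℝ ↥G = n := by
      rw [← hFrk]
      exact (Submodule.comapSubtypeEquivOfLe hFY).finrank_eq
    have hd := hYn G hGle inferInstance hGrk
    let e : ↥F →L[ℝ] ↥Y := F.subtypeL.codRestrict Y (fun f => hFY f.2)
    let S : ↥F →L[ℝ] ↥G := e.codRestrict G (fun f => f.2)
    have hTS : ∀ f : ↥F, Y.subtypeL ((S f : ↥Y)) = (f : X) := fun _ => rfl
    have hSn : ‖S‖ ≤ 1 := by
      refine ContinuousLinearMap.opNorm_le_bound _ zero_le_one (fun f => ?_)
      have : ‖S f‖ = ‖f‖ := rfl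
      rw [this, one_mul]
    have hST : ‖S‖ * ‖Y.subtypeL‖ ≤ 1 :=
      mul_le_one₀ hSn Y.subtypeL.opNorm_nonneg (Submodule.norm_subtypeL_le Y)
    exact D.transfer ↥Y X G F inferInstance hFfd S Y.subtypeL hTS le_rfl hST hd

end Pieces


/-- for a finite-codimensional closed subspace `Y` of a Banach space `X`,
`X` is `d`-small iff `Y` is `d`-small, and `X` is asymptotically `d`-small iff `Y` is
asymptotically `d`-small. -/
theorem statement10 (D : Degree)
    (X : Type) [NormedAddCommGroup X] [NormedSpace ℝ X] [CompleteSpace X]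
    (Y : Submodule ℝ X) (hY : IsClosed (Y : Set X))
    (hcodim : FiniteDimensional ℝ (X ⧸ Y)) :
    haveI : CompleteSpace ↥Y := hY.completeSpace_coe
    (DSmall D X ↔ DSmall D ↥Y) ∧ (AsympDSmall D X ↔ AsympDSmall D ↥Y) := by
  haveI : CompleteSpace ↥Y := hY.completeSpace_coe
  obtain ⟨P, hP⟩ := Submodule.ClosedComplemented.of_quotient_finiteDimensional hY
  constructor
  · constructor
    · exact dsmall_easy D X Y P hP
    · intro h
      by_cases hfin : FiniteDimensional ℝ X
      · exact dsmall_of_findim D X hfin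
      · exact hard_direction D X Y hY hcodim hfin h
  · exact ⟨asymp_easy D X Y hY P hP, asymp_hard D X Y hY hcodim⟩

end
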